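/- arXiv:1509.01958 — 3 statements merged into one kernel-verified Lean document; each statement's English description precedes it below -/
import Mathlib

section
/- For every k ≥ 0 and every i > k, the identity (a_i)^(∏_{j=0}^{k} N_{i−j}) = (a_{i−k−1})^(∏_{j=0}^{k} (N_{i−j} + 1)) holds. -/
/-- The `j`-th Fermat number `N_j = 2^(2^j) + 1`. -/
def fermatN (j : ℕ) : ℕ := 2 ^ 2 ^ j + 1

/-- `conwayL c n` is the subfield `L_{n-1}` of the algebraic closure of `F_2`
generated over `F_2` by `c 0, …, c (n-1)`; in particular `conwayL c 0 = ⊥ = F_2`. -/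
noncomputable def conwayL (c : ℕ → AlgebraicClosure (ZMod 2)) (n : ℕ) :
    IntermediateField (ZMod 2) (AlgebraicClosure (ZMod 2)) :=
  IntermediateField.adjoin (ZMod 2) (c '' Set.Iio n)

section ConwayAux

open Finset Polynomial

local notation "K" => AlgebraicClosure (ZMod 2)

variable {c : ℕ → AlgebraicClosure (ZMod 2)}

lemma conway_two_eq_zero : (2 : K) = 0 := by
  have := CharP.cast_eq_zero K 2
  exact_mod_cast this

lemma conway_fixed_mono {x : K} {m M : ℕ} (h : x ^ 2 ^ 2 ^ m = x) (hM : m ≤ M) :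
    x ^ 2 ^ 2 ^ M = x := by
  induction M, hM using Nat.le_induction with
  | base => exact h
  | succ M hM ih =>
    have e : (2 : ℕ) ^ 2 ^ (M + 1) = 2 ^ 2 ^ M * 2 ^ 2 ^ M := by
      rw [pow_succ, pow_mul, sq]
    rw [e, pow_mul, ih, ih]

lemma conway_fix_succ {x : K} {j : ℕ} (h : x ^ 2 ^ 2 ^ j = x + 1) :
    x ^ 2 ^ 2 ^ (j + 1) = x := by
  have e : (2 : ℕ) ^ 2 ^ (j + 1) = 2 ^ 2 ^ j * 2 ^ 2 ^ j := by
    rw [pow_succ, pow_mul, sq]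
  rw [e, pow_mul, h, add_pow_char_pow, h, one_pow, add_assoc]
  simp [CharTwo.add_self_eq_zero]

lemma conway_sq (hrec : ∀ i : ℕ, c (i + 1) ^ 2 + c (i + 1) + ∏ j ∈ Finset.range (i + 1), c j = 0)
    (i : ℕ) : c (i + 1) ^ 2 = c (i + 1) + ∏ j ∈ Finset.range (i + 1), c j := by
  have h2 : (2 : K) = 0 := conway_two_eq_zero
  linear_combination hrec i + (-(c (i + 1)) - ∏ j ∈ Finset.range (i + 1), c j) * h2

lemma conway_sq0 (hc0 : c 0 ^ 2 + c 0 + 1 = 0) : c 0 ^ 2 = c 0 + 1 := by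
  have h2 : (2 : K) = 0 := conway_two_eq_zero
  linear_combination hc0 + (-(c 0) - 1) * h2

lemma conway_mem_fixed {n : ℕ} (hfix : ∀ j, j < n → c j ^ 2 ^ 2 ^ n = c j) :
    ∀ x ∈ conwayL c n, x ^ 2 ^ 2 ^ n = x := by
  intro x hx
  have hx' : x ∈ IntermediateField.adjoin (ZMod 2) (c '' Set.Iio n) := hx
  clear hx
  induction hx' using IntermediateField.adjoin_induction with
  | mem y hy =>
    obtain ⟨j, hj, rfl⟩ := hy
    exact hfix j hj
  | algebraMap z =>
    rcases (by decide : ∀ z : ZMod 2, z = 0 ∨ z = 1) z with rfl | rfl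
    · rw [map_zero]
      exact zero_pow (by positivity)
    · rw [map_one, one_pow]
  | add a b _ _ ha hb =>
    rw [add_pow_char_pow, ha, hb]
  | inv a _ ha =>
    rw [inv_pow, ha]
  | mul a b _ _ ha hb =>
    rw [mul_pow, ha, hb]

lemma conway_fixedSet (q : ℕ) (hq : 1 < q) :
    ({x : K | x ^ q = x}).Finite ∧ ({x : K | x ^ q = x}).ncard ≤ q := by
  classical
  set p : Polynomial K := X ^ q - X with hp
  have hdX : (X : Polynomial K).natDegree < (X ^ q : Polynomial K).natDegree := by
    rw [natDegree_X_pow, natDegree_X]; exact hq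
  have hd : p.natDegree = q := by
    rw [hp, natDegree_sub_eq_left_of_natDegree_lt hdX, natDegree_X_pow]
  have hpne : p ≠ 0 := by
    intro h
    rw [h, natDegree_zero] at hd
    omega
  have hset : {x : K | x ^ q = x} = {x : K | IsRoot p x} := by
    ext x
    simp [hp, IsRoot, sub_eq_zero]
  have hset2 : {x : K | IsRoot p x} = ↑p.roots.toFinset := by
    ext x
    simp [Multiset.mem_toFinset, mem_roots, hpne, IsRoot]
  constructor
  · exact hset ▸ finite_setOf_isRoot hpne
  · rw [hset, hset2, Set.ncard_coe_finset]
    exact le_trans (Multiset.toFinset_card_le _) (le_trans (card_roots' p) hd.le)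

lemma conway_not_mem (hc0 : c 0 ^ 2 + c 0 + 1 = 0)
    (hnot : ∀ i : ℕ, c (i + 1) ∉ conwayL c (i + 1)) :
    ∀ m, c m ∉ conwayL c m := by
  intro m
  match m with
  | (m + 1) => exact hnot m
  | 0 =>
    intro hmem
    have h0 : conwayL c 0 = ⊥ := by
      rw [conwayL]
      have hIio : Set.Iio 0 = (∅ : Set ℕ) := by ext x; simp
      have : c '' Set.Iio 0 = ∅ := by rw [hIio, Set.image_empty]
      rw [this, IntermediateField.adjoin_empty]
    rw [h0, IntermediateField.mem_bot] at hmem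
    obtain ⟨z, hz⟩ := hmem
    have h2 : (2 : K) = 0 := conway_two_eq_zero
    rcases (by decide : ∀ z : ZMod 2, z = 0 ∨ z = 1) z with rfl | rfl
    · rw [map_zero] at hz
      rw [← hz] at hc0
      simp at hc0
    · rw [map_one] at hz
      rw [← hz] at hc0
      have : (1 : K) = 0 := by linear_combination hc0 - h2
      exact one_ne_zero this

lemma conway_mono {m : ℕ} : conwayL c m ≤ conwayL c (m + 1) :=
  IntermediateField.adjoin.mono _ _ _
    (Set.image_mono (fun x hx => lt_trans hx (Nat.lt_succ_self m)))

lemma conway_self_mem {m : ℕ} : c m ∈ conwayL c (m + 1) :=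
  IntermediateField.subset_adjoin _ _ ⟨m, Nat.lt_succ_self m, rfl⟩

lemma conway_card_ge (hc0 : c 0 ^ 2 + c 0 + 1 = 0)
    (hnot : ∀ i : ℕ, c (i + 1) ∉ conwayL c (i + 1)) {n : ℕ}
    (hfin : ∀ m, m ≤ n → (conwayL c m : Set K).Finite) :
    ∀ m, m ≤ n → 2 ^ 2 ^ m ≤ (conwayL c m : Set K).ncard := by
  intro m
  induction m with
  | zero =>
    intro _
    have h01 : (0 : K) ∈ (conwayL c 0 : Set K) ∧ (1 : K) ∈ (conwayL c 0 : Set K) :=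
      ⟨zero_mem _, one_mem _⟩
    have : 1 < (conwayL c 0 : Set K).ncard := by
      rw [Set.one_lt_ncard_iff (hfin 0 (Nat.zero_le n))]
      exact ⟨0, 1, h01.1, h01.2, zero_ne_one⟩
    simpa using (show 2 ≤ (conwayL c 0 : Set K).ncard from this)
  | succ m ih =>
    intro hm
    have hm' : m ≤ n := le_trans (Nat.le_succ m) hm
    have hA := ih hm'
    haveI : Finite ((conwayL c (m + 1) : Set K) : Type _) :=
      (hfin (m + 1) hm).to_subtype
    set A : Set K := (conwayL c m : Set K)
    set B : Set K := (conwayL c (m + 1) : Set K)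
    have hAB : A ⊆ B := fun x hx => conway_mono hx
    have hcmB : c m ∈ conwayL c (m + 1) := conway_self_mem
    let f : A × A → B := fun p =>
      ⟨(p.1 : K) + (p.2 : K) * c m,
        add_mem (hAB p.1.2) (mul_mem (hAB p.2.2) hcmB)⟩
    have hf : Function.Injective f := by
      intro p q hpq
      have h12 : (p.1 : K) + (p.2 : K) * c m = (q.1 : K) + (q.2 : K) * c m :=
        congrArg Subtype.val hpq
      by_cases h2 : (p.2 : K) = (q.2 : K)
      · have h1 : (p.1 : K) = (q.1 : K) := by
          rw [h2] at h12
          exact add_right_cancel h12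
        exact Prod.ext (Subtype.ext h1) (Subtype.ext h2)
      · exfalso
        apply conway_not_mem hc0 hnot m
        have hne : ((q.2 : K) - (p.2 : K)) ≠ 0 := sub_ne_zero.mpr (fun h => h2 h.symm)
        have hlin : c m * ((q.2 : K) - (p.2 : K)) = (p.1 : K) - (q.1 : K) := by
          linear_combination -h12
        have hcm : c m = ((p.1 : K) - (q.1 : K)) * ((q.2 : K) - (p.2 : K))⁻¹ :=
          (eq_mul_inv_iff_mul_eq₀ hne).mpr hlin
        rw [hcm]
        exact mul_mem (sub_mem p.1.2 q.1.2) (inv_mem (sub_mem q.2.2 p.2.2))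
    have hcard : Nat.card (A × A) ≤ Nat.card B := Nat.card_le_card_of_injective f hf
    rw [Nat.card_prod, Nat.card_coe_set_eq, Nat.card_coe_set_eq] at hcard
    have e : (2 : ℕ) ^ 2 ^ (m + 1) = 2 ^ 2 ^ m * 2 ^ 2 ^ m := by
      rw [pow_succ, pow_mul, sq]
    calc 2 ^ 2 ^ (m + 1) = 2 ^ 2 ^ m * 2 ^ 2 ^ m := e
      _ ≤ A.ncard * A.ncard := Nat.mul_le_mul hA hA
      _ ≤ B.ncard := hcard

lemma conway_key (hc0 : c 0 ^ 2 + c 0 + 1 = 0)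
    (hrec : ∀ i : ℕ, c (i + 1) ^ 2 + c (i + 1) + ∏ j ∈ Finset.range (i + 1), c j = 0)
    (hnot : ∀ i : ℕ, c (i + 1) ∉ conwayL c (i + 1)) :
    ∀ n, c n ^ 2 ^ 2 ^ n = c n + 1 := by
  intro n
  induction n using Nat.strong_induction_on with
  | _ n ih =>
    match n with
    | 0 => simpa using conway_sq0 hc0
    | (i + 1) =>
      have hfix1 : ∀ j, j < i + 1 → c j ^ 2 ^ 2 ^ (j + 1) = c j := fun j hj =>
        conway_fix_succ (ih j hj)
      have hfixlvl : ∀ m, m ≤ i + 1 → ∀ x ∈ conwayL c m, x ^ 2 ^ 2 ^ m = x := by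
        intro m hm
        apply conway_mem_fixed
        intro j hj
        exact conway_fixed_mono (hfix1 j (lt_of_lt_of_le hj hm)) hj
      have hfin : ∀ m, m ≤ i + 1 → (conwayL c m : Set K).Finite := by
        intro m hm
        refine Set.Finite.subset (conway_fixedSet (2 ^ 2 ^ m) (Nat.one_lt_two_pow_iff.mpr (Nat.pos_iff_ne_zero.mp (Nat.two_pow_pos m)))).1 ?_
        intro x hx
        exact hfixlvl m hm x hx
      have hge : 2 ^ 2 ^ (i + 1) ≤ (conwayL c (i + 1) : Set K).ncard :=
        conway_card_ge hc0 hnot hfin (i + 1) le_rfl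
      set S : Set K := {x : K | x ^ 2 ^ 2 ^ (i + 1) = x} with hSdef
      have hLS : (conwayL c (i + 1) : Set K) ⊆ S := fun x hx => hfixlvl (i + 1) le_rfl x hx
      obtain ⟨hSfin, hScard⟩ := conway_fixedSet (2 ^ 2 ^ (i + 1)) (Nat.one_lt_two_pow_iff.mpr (Nat.pos_iff_ne_zero.mp (Nat.two_pow_pos (i+1))))
      have hEq : (conwayL c (i + 1) : Set K) = S :=
        Set.eq_of_subset_of_ncard_le hLS (le_trans hScard hge) hSfin
      set a : K := ∏ j ∈ Finset.range (i + 1), c j with hadef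
      have hpow : ∀ m : ℕ, c (i + 1) ^ 2 ^ m = c (i + 1) + ∑ t ∈ Finset.range m, a ^ 2 ^ t := by
        intro m
        induction m with
        | zero => simp
        | succ m ihm =>
          rw [pow_succ, pow_mul, ihm, add_pow_char, conway_sq hrec i, sum_pow_char,
            Finset.sum_range_succ']
          have h3 : ∀ t ∈ Finset.range m, (a ^ 2 ^ t) ^ 2 = a ^ 2 ^ (t + 1) := by
            intro t _
            rw [← pow_mul, ← pow_succ]
          rw [Finset.sum_congr rfl h3]
          simp only [pow_zero, pow_one]
          ring
      have hafix : a ^ 2 ^ 2 ^ (i + 1) = a := by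
        rw [hadef, ← Finset.prod_pow]
        refine Finset.prod_congr rfl ?_
        intro j hj
        exact conway_fixed_mono (hfix1 j (Finset.mem_range.mp hj))
          (Finset.mem_range.mp hj)
      set T : K := ∑ t ∈ Finset.range (2 ^ (i + 1)), a ^ 2 ^ t with hTdef
      have hTsq : T ^ 2 = T := by
        have h1 : T ^ 2 = ∑ t ∈ Finset.range (2 ^ (i + 1)), a ^ 2 ^ (t + 1) := by
          rw [hTdef, sum_pow_char]
          exact Finset.sum_congr rfl fun t _ => by rw [← pow_mul, ← pow_succ]
        have h2 : T ^ 2 + a = T + a := by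
          rw [h1]
          calc (∑ t ∈ Finset.range (2 ^ (i + 1)), a ^ 2 ^ (t + 1)) + a
              = ∑ t ∈ Finset.range (2 ^ (i + 1) + 1), a ^ 2 ^ t := by
                rw [Finset.sum_range_succ']; simp
            _ = T + a ^ 2 ^ 2 ^ (i + 1) := Finset.sum_range_succ _ _
            _ = T + a := by rw [hafix]
        exact add_right_cancel h2
      have hT01 : T = 0 ∨ T = 1 := by
        have : T * (T - 1) = 0 := by
          rw [mul_sub, mul_one, ← sq, hTsq, sub_self]
        rcases mul_eq_zero.mp this with h | h
        · exact Or.inl h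
        · exact Or.inr (sub_eq_zero.mp h)
      rcases hT01 with hT0 | hT1
      · exfalso
        apply hnot i
        have hmem : c (i + 1) ∈ S := by
          show c (i + 1) ^ 2 ^ 2 ^ (i + 1) = c (i + 1)
          rw [show (2 : ℕ) ^ 2 ^ (i + 1) = 2 ^ 2 ^ (i + 1) from rfl, hpow (2 ^ (i + 1)),
            ← hTdef, hT0, add_zero]
        rw [← hEq] at hmem
        exact hmem
      · rw [show (2 : ℕ) ^ 2 ^ (i + 1) = 2 ^ 2 ^ (i + 1) from rfl, hpow (2 ^ (i + 1)),
          ← hTdef, hT1]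

lemma conway_a_fix (hc0 : c 0 ^ 2 + c 0 + 1 = 0)
    (hrec : ∀ i : ℕ, c (i + 1) ^ 2 + c (i + 1) + ∏ j ∈ Finset.range (i + 1), c j = 0)
    (hnot : ∀ i : ℕ, c (i + 1) ∉ conwayL c (i + 1)) (n : ℕ) :
    (∏ j ∈ Finset.range (n + 1), c j) ^ 2 ^ 2 ^ (n + 1) = ∏ j ∈ Finset.range (n + 1), c j := by
  rw [← Finset.prod_pow]
  refine Finset.prod_congr rfl ?_
  intro j hj
  exact conway_fixed_mono (conway_fix_succ (conway_key hc0 hrec hnot j))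
    (Finset.mem_range.mp hj)

lemma conway_step (hc0 : c 0 ^ 2 + c 0 + 1 = 0)
    (hrec : ∀ i : ℕ, c (i + 1) ^ 2 + c (i + 1) + ∏ j ∈ Finset.range (i + 1), c j = 0)
    (hnot : ∀ i : ℕ, c (i + 1) ∉ conwayL c (i + 1)) (n : ℕ) :
    (∏ j ∈ Finset.range (n + 2), c j) ^ fermatN (n + 1)
      = (∏ j ∈ Finset.range (n + 1), c j) ^ (fermatN (n + 1) + 1) := by
  set a : AlgebraicClosure (ZMod 2) := ∏ j ∈ Finset.range (n + 1), c j with hadef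
  have hsplit : ∏ j ∈ Finset.range (n + 2), c j = a * c (n + 1) := by
    rw [Finset.prod_range_succ]
  have hkey := conway_key hc0 hrec hnot (n + 1)
  have hafix : a ^ 2 ^ 2 ^ (n + 1) = a := conway_a_fix hc0 hrec hnot n
  have h2 : (2 : K) = 0 := conway_two_eq_zero
  have hq : c (n + 1) ^ 2 ^ 2 ^ (n + 1) * c (n + 1) = a := by
    rw [hkey]
    have hsq := conway_sq hrec n
    linear_combination hsq + c (n + 1) * h2
  simp only [fermatN, hsplit]
  have e1 : (a * c (n + 1)) ^ (2 ^ 2 ^ (n + 1) + 1)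
      = (a ^ 2 ^ 2 ^ (n + 1) * a) * (c (n + 1) ^ 2 ^ 2 ^ (n + 1) * c (n + 1)) := by
    rw [mul_pow, pow_succ a (2 ^ 2 ^ (n + 1)), pow_succ (c (n + 1)) (2 ^ 2 ^ (n + 1))]
  have e2 : a ^ (2 ^ 2 ^ (n + 1) + 1 + 1) = a ^ 2 ^ 2 ^ (n + 1) * a * a := by
    rw [pow_succ a (2 ^ 2 ^ (n + 1) + 1), pow_succ a (2 ^ 2 ^ (n + 1))]
  rw [e1, e2, hafix, hq]

end ConwayAux

/-- For every `k ≥ 0` and every `i > k`,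
`(a_i)^(∏_{j=0}^{k} N_{i−j}) = (a_{i−k−1})^(∏_{j=0}^{k} (N_{i−j} + 1))`,
where `a_m = ∏_{j=0}^{m} c_j`. -/
theorem conway_a_pow_prod_fermat (c : ℕ → AlgebraicClosure (ZMod 2))
    (hc0 : c 0 ^ 2 + c 0 + 1 = 0)
    (hrec : ∀ i : ℕ, c (i + 1) ^ 2 + c (i + 1) + ∏ j ∈ Finset.range (i + 1), c j = 0)
    (hnot : ∀ i : ℕ, c (i + 1) ∉ conwayL c (i + 1))
    (k i : ℕ) (hik : k < i) :
    (∏ j ∈ Finset.range (i + 1), c j) ^ (∏ j ∈ Finset.range (k + 1), fermatN (i - j))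
      = (∏ j ∈ Finset.range (i - k), c j) ^ (∏ j ∈ Finset.range (k + 1), (fermatN (i - j) + 1)) := by
  induction k generalizing i with
  | zero =>
    obtain ⟨m, rfl⟩ : ∃ m, i = m + 1 := ⟨i - 1, by omega⟩
    simpa using conway_step hc0 hrec hnot m
  | succ k IH =>
    obtain ⟨m, rfl⟩ : ∃ m, i = m + 1 := ⟨i - 1, by omega⟩
    have hkm : k < m := by omega
    have hIH := IH m hkm
    have hsub : m + 1 - (k + 1) = m - k := by omega
    have hexp1 : ∏ j ∈ Finset.range (k + 2), fermatN (m + 1 - j)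
        = (∏ j ∈ Finset.range (k + 1), fermatN (m - j)) * fermatN (m + 1) := by
      rw [Finset.prod_range_succ']
      have h1 : ∀ j ∈ Finset.range (k + 1), fermatN (m + 1 - (j + 1)) = fermatN (m - j) :=
        fun j _ => by congr 1; omega
      rw [Finset.prod_congr rfl h1]
      norm_num
    have hexp2 : ∏ j ∈ Finset.range (k + 2), (fermatN (m + 1 - j) + 1)
        = (∏ j ∈ Finset.range (k + 1), (fermatN (m - j) + 1)) * (fermatN (m + 1) + 1) := by
      rw [Finset.prod_range_succ']
      have h1 : ∀ j ∈ Finset.range (k + 1), fermatN (m + 1 - (j + 1)) + 1 = fermatN (m - j) + 1 :=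
        fun j _ => by congr 2; omega
      rw [Finset.prod_congr rfl h1]
      norm_num
    rw [hexp1, hexp2, hsub]
    calc (∏ j ∈ Finset.range (m + 1 + 1), c j)
          ^ ((∏ j ∈ Finset.range (k + 1), fermatN (m - j)) * fermatN (m + 1))
        = ((∏ j ∈ Finset.range (m + 2), c j) ^ fermatN (m + 1))
            ^ (∏ j ∈ Finset.range (k + 1), fermatN (m - j)) := by
          rw [← pow_mul, Nat.mul_comm]
      _ = ((∏ j ∈ Finset.range (m + 1), c j) ^ (fermatN (m + 1) + 1))
            ^ (∏ j ∈ Finset.range (k + 1), fermatN (m - j)) := by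
          rw [conway_step hc0 hrec hnot m]
      _ = ((∏ j ∈ Finset.range (m + 1), c j)
            ^ (∏ j ∈ Finset.range (k + 1), fermatN (m - j))) ^ (fermatN (m + 1) + 1) := by
          rw [← pow_mul, Nat.mul_comm, pow_mul]
      _ = ((∏ j ∈ Finset.range (m - k), c j)
            ^ (∏ j ∈ Finset.range (k + 1), (fermatN (m - j) + 1))) ^ (fermatN (m + 1) + 1) := by
          rw [hIH]
      _ = (∏ j ∈ Finset.range (m - k), c j)
            ^ ((∏ j ∈ Finset.range (k + 1), (fermatN (m - j) + 1)) * (fermatN (m + 1) + 1)) := by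
          rw [← pow_mul]
end

section
/- For every u ≥ 1, if (c_u)^l ∈ L_{u−1} for a positive integer l, then the greatest common divisor of l and N_u is greater than 1. -/
set_option synthInstance.maxHeartbeats 1000000
set_option maxHeartbeats 1000000

open Polynomial IntermediateField

local notation "F" => AlgebraicClosure (ZMod 2)

lemma quad_deg (K : IntermediateField (ZMod 2) F) {x a : F} (ha : a ∈ K)
    (hq : x ^ 2 + x + a = 0) (hx : x ∉ K) :
    IsIntegral K x ∧ (minpoly K x).natDegree = 2 := by
  set P : Polynomial K := X ^ 2 + X + C ⟨a, ha⟩ with hP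
  have hdeg : P.natDegree = 2 := by rw [hP]; compute_degree!
  have hPm : P.Monic := by rw [hP]; monicity!
  have hroot : Polynomial.aeval x P = 0 := by
    rw [hP]
    rw [map_add, map_add, map_pow, aeval_X, aeval_C]
    rw [IntermediateField.algebraMap_apply]
    exact hq
  have hint : IsIntegral K x := ⟨P, hPm, by rwa [← Polynomial.aeval_def]⟩
  refine ⟨hint, le_antisymm ?_ ?_⟩
  · have := Polynomial.natDegree_le_of_dvd (minpoly.dvd _ x hroot) hPm.ne_zero
    omega
  · refine (minpoly.two_le_natDegree_iff hint).mpr ?_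
    rintro ⟨y, rfl⟩
    exact hx y.2

lemma conwayL_zero (c : ℕ → F) : conwayL c 0 = ⊥ := by
  rw [conwayL, show Set.Iio 0 = (∅ : Set ℕ) from by ext m; simp]
  simp [IntermediateField.adjoin_empty]

lemma conwayL_notmem (c : ℕ → F)
    (hc0 : c 0 ^ 2 + c 0 + 1 = 0)
    (hnot : ∀ i : ℕ, c (i + 1) ∉ conwayL c (i + 1)) (n : ℕ) :
    c n ∉ conwayL c n := by
  cases n with
  | zero =>
      rw [conwayL_zero]
      rintro hmem
      rw [IntermediateField.mem_bot] at hmem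
      obtain ⟨y, hy⟩ := hmem
      have hcase : ∀ z : ZMod 2, z = 0 ∨ z = 1 := by decide
      rcases hcase y with h | h <;> rw [h] at hy
      · rw [map_zero] at hy
        rw [← hy] at hc0
        simp at hc0
      · rw [map_one] at hy
        rw [← hy] at hc0
        rw [one_pow, CharTwo.add_self_eq_zero, zero_add] at hc0
        exact one_ne_zero hc0
  | succ i => exact hnot i

lemma conwayL_quad (c : ℕ → F)
    (hc0 : c 0 ^ 2 + c 0 + 1 = 0)
    (hrec : ∀ i : ℕ, c (i + 1) ^ 2 + c (i + 1) + ∏ j ∈ Finset.range (i + 1), c j = 0)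
    (n : ℕ) : ∃ a ∈ conwayL c n, c n ^ 2 + c n + a = 0 := by
  cases n with
  | zero => exact ⟨1, one_mem _, hc0⟩
  | succ i =>
      refine ⟨∏ j ∈ Finset.range (i + 1), c j, ?_, hrec i⟩
      apply Subalgebra.prod_mem
      intro j hj
      apply IntermediateField.subset_adjoin
      exact ⟨j, by simpa using Finset.mem_range.mp hj, rfl⟩

lemma conwayL_finrank (c : ℕ → F)
    (hc0 : c 0 ^ 2 + c 0 + 1 = 0)
    (hrec : ∀ i : ℕ, c (i + 1) ^ 2 + c (i + 1) + ∏ j ∈ Finset.range (i + 1), c j = 0)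
    (hnot : ∀ i : ℕ, c (i + 1) ∉ conwayL c (i + 1)) (n : ℕ) :
    ∃ _ : FiniteDimensional (ZMod 2) (conwayL c n),
      Module.finrank (ZMod 2) (conwayL c n) = 2 ^ n := by
  induction n with
  | zero =>
      rw [conwayL_zero]
      exact ⟨inferInstance, IntermediateField.finrank_bot⟩
  | succ n ih =>
      obtain ⟨hFD, hfr⟩ := ih
      obtain ⟨a, ha, hq⟩ := conwayL_quad c hc0 hrec n
      obtain ⟨hint, hmp⟩ := quad_deg (conwayL c n) ha hq (conwayL_notmem c hc0 hnot n)
      have hE2 : Module.finrank (conwayL c n)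
          (IntermediateField.adjoin (conwayL c n) {c n}) = 2 := by
        rw [IntermediateField.adjoin.finrank hint, hmp]
      have hEFD : FiniteDimensional (conwayL c n)
          (IntermediateField.adjoin (conwayL c n) {c n}) :=
        IntermediateField.adjoin.finiteDimensional hint
      have himg : c '' Set.Iio (n + 1) = c '' Set.Iio n ∪ {c n} := by
        rw [show Set.Iio (n + 1) = Set.Iio n ∪ {n} from by ext m; simp]
        rw [Set.image_union, Set.image_singleton]
      have hL : conwayL c (n + 1) =
          (IntermediateField.adjoin (conwayL c n) {c n}).restrictScalars (ZMod 2) := by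
        rw [conwayL, himg, ← IntermediateField.adjoin_adjoin_left]
        rfl
      rw [hL]
      have hFD' : FiniteDimensional (ZMod 2)
          (IntermediateField.adjoin (conwayL c n) {c n}) :=
        FiniteDimensional.trans (ZMod 2) (conwayL c n) _
      refine ⟨hFD', ?_⟩
      have := Module.finrank_mul_finrank (ZMod 2) (conwayL c n)
        (IntermediateField.adjoin (conwayL c n) {c n})
      show Module.finrank (ZMod 2)
          (IntermediateField.adjoin (conwayL c n) {c n}) = 2 ^ (n + 1)
      rw [← this, hfr, hE2]
      ring

lemma roots_count (K : IntermediateField (ZMod 2) F) [Fintype K] {q : ℕ} (hq : 1 < q)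
    (hcard : Fintype.card K = q) (hpow : ∀ z : F, z ∈ K → z ^ q = z)
    {y : F} (hy : y ^ q = y) : y ∈ K := by
  classical
  by_contra hyK
  set p : Polynomial F := X ^ q - X with hp
  have hdeg : p.natDegree = q := by
    rw [hp]
    have hlt : (X : Polynomial F).natDegree < ((X : Polynomial F) ^ q).natDegree := by
      rw [natDegree_X, natDegree_X_pow]; omega
    rw [Polynomial.natDegree_sub_eq_left_of_natDegree_lt hlt, natDegree_X_pow]
  have hpne : p ≠ 0 := fun h => by rw [h, Polynomial.natDegree_zero] at hdeg; omega
  have hmemroots : ∀ z : F, z ^ q = z → z ∈ p.roots.toFinset := by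
    intro z hz
    rw [Multiset.mem_toFinset, Polynomial.mem_roots hpne]
    show p.IsRoot z
    rw [hp, Polynomial.IsRoot, Polynomial.eval_sub, Polynomial.eval_pow, Polynomial.eval_X,
      hz, sub_self]
  have hsub : insert y (Finset.univ.image (fun z : K => (z : F))) ⊆ p.roots.toFinset := by
    intro z hz
    rcases Finset.mem_insert.mp hz with rfl | hz
    · exact hmemroots _ hy
    · obtain ⟨w, _, rfl⟩ := Finset.mem_image.mp hz
      exact hmemroots _ (hpow _ w.2)
  have h2 : y ∉ Finset.univ.image (fun z : K => (z : F)) := by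
    intro hmem
    obtain ⟨w, _, hw⟩ := Finset.mem_image.mp hmem
    exact hyK (hw ▸ w.2)
  have hcard2 : q + 1 ≤ p.roots.toFinset.card := by
    have h1 : (Finset.univ.image (fun z : K => (z : F))).card = q := by
      rw [Finset.card_image_of_injective _ Subtype.coe_injective, Finset.card_univ, hcard]
    calc q + 1 = (insert y (Finset.univ.image (fun z : K => (z : F)))).card := by
          rw [Finset.card_insert_of_notMem h2, h1]
    _ ≤ _ := Finset.card_le_card hsub
  have h3 := (p.roots.toFinset_card_le).trans (Polynomial.card_roots' p)
  omega

/-- For every `u ≥ 1`, if `(c_u)^l ∈ L_{u−1}` for a positive integer `l`,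
then `gcd l N_u > 1`. -/
theorem conway_gcd_gt_one_of_pow_mem (c : ℕ → AlgebraicClosure (ZMod 2))
    (hc0 : c 0 ^ 2 + c 0 + 1 = 0)
    (hrec : ∀ i : ℕ, c (i + 1) ^ 2 + c (i + 1) + ∏ j ∈ Finset.range (i + 1), c j = 0)
    (hnot : ∀ i : ℕ, c (i + 1) ∉ conwayL c (i + 1))
    (u : ℕ) (hu : 1 ≤ u) (l : ℕ) (hl : 0 < l)
    (hmem : c u ^ l ∈ conwayL c u) :
    1 < Nat.gcd l (fermatN u) := by
  obtain ⟨hFD, hfr⟩ := conwayL_finrank c hc0 hrec hnot u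
  set K := conwayL c u with hK
  haveI : Finite K := Module.finite_of_finite (ZMod 2)
  haveI : Fintype K := Fintype.ofFinite _
  set q : ℕ := 2 ^ 2 ^ u with hqdef
  have hcard : Fintype.card K = q := by
    rw [Module.card_eq_pow_finrank (K := ZMod 2) (V := K), ZMod.card, hfr]
  have h1u : 1 ≤ 2 ^ u := Nat.one_le_two_pow
  have hq2 : 2 ≤ q := by
    calc 2 = 2 ^ 1 := rfl
    _ ≤ 2 ^ 2 ^ u := Nat.pow_le_pow_right (by norm_num) h1u
  have hKpow : ∀ y : F, y ∈ K → y ^ q = y := by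
    intro y hy
    have h := FiniteField.pow_card (⟨y, hy⟩ : K)
    rw [hcard] at h
    simpa using congrArg Subtype.val h
  have hroots : ∀ y : F, y ^ q = y → y ∈ K :=
    fun y hy => roots_count K (by omega) hcard hKpow hy
  have hx : c u ∉ K := conwayL_notmem c hc0 hnot u
  obtain ⟨a, ha, hquad⟩ := conwayL_quad c hc0 hrec u
  have h2 : (2 : F) = 0 := by exact_mod_cast CharP.cast_eq_zero F 2
  have hx2 : c u ^ 2 = c u + a := by linear_combination hquad - (c u + a) * h2
  have hfrob : ∀ s t : F, (s + t) ^ q = s ^ q + t ^ q := by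
    intro s t
    rw [hqdef]
    exact add_pow_char_pow (R := F) (p := 2) s t (2 ^ u)
  have haq : a ^ q = a := hKpow a ha
  have hxq2 : (c u ^ q) ^ 2 = c u ^ q + a := by
    calc (c u ^ q) ^ 2 = (c u ^ 2) ^ q := by ring
    _ = (c u + a) ^ q := by rw [hx2]
    _ = c u ^ q + a := by rw [hfrob, haq]
  have hs : (c u ^ q + c u) ^ 2 = c u ^ q + c u := by
    rw [CharTwo.add_sq, hxq2, hx2]
    linear_combination a * h2
  have hcases : c u ^ q + c u = 0 ∨ c u ^ q + c u = 1 := by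
    have hfac : (c u ^ q + c u) * (c u ^ q + c u - 1) = 0 := by linear_combination hs
    rcases mul_eq_zero.mp hfac with h | h
    · exact Or.inl h
    · exact Or.inr (sub_eq_zero.mp h)
  have hxq : c u ^ q = c u + 1 := by
    rcases hcases with h | h
    · exfalso
      apply hx
      apply hroots
      linear_combination h - c u * h2
    · linear_combination h - c u * h2
  have hx0 : c u ≠ 0 := fun h0 => hx (by rw [h0]; exact K.zero_mem)
  have hxqq : c u ^ (q * q) = c u := by
    rw [pow_mul, hxq, hfrob, one_pow, hxq]
    linear_combination h2
  obtain ⟨m, hm⟩ : ∃ m, q = m + 1 := ⟨q - 1, by omega⟩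
  have hql : (c u ^ l) ^ q = c u ^ l := hKpow _ hmem
  have hordl : c u ^ (l * (q - 1)) = 1 := by
    have key : c u ^ l * c u ^ (l * (q - 1)) = c u ^ l * 1 := by
      rw [mul_one, ← pow_add]
      have he : l + l * (q - 1) = l * q := by rw [hm]; simp [Nat.add_sub_cancel]; ring
      rw [he, pow_mul]
      exact hql
    exact mul_left_cancel₀ (pow_ne_zero _ hx0) key
  have hordq : c u ^ ((q + 1) * (q - 1)) = 1 := by
    have key : c u * c u ^ ((q + 1) * (q - 1)) = c u * 1 := by
      have he : 1 + (q + 1) * (q - 1) = q * q := by rw [hm]; simp [Nat.add_sub_cancel]; ring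
      calc c u * c u ^ ((q + 1) * (q - 1)) = c u ^ (1 + (q + 1) * (q - 1)) := by
            rw [pow_add, pow_one]
      _ = c u * 1 := by rw [he, hxqq, mul_one]
    exact mul_left_cancel₀ hx0 key
  by_contra hcon
  push_neg at hcon
  have hN : fermatN u = q + 1 := by rw [fermatN, hqdef]
  have hgcd1 : Nat.gcd l (q + 1) = 1 := by
    rw [hN] at hcon
    have := Nat.gcd_pos_of_pos_right l (show 0 < q + 1 by omega)
    omega
  have hdvd : orderOf (c u) ∣ q - 1 := by
    have d1 := orderOf_dvd_of_pow_eq_one hordl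
    have d2 := orderOf_dvd_of_pow_eq_one hordq
    have hg := Nat.dvd_gcd d1 d2
    rwa [Nat.gcd_mul_right, hgcd1, one_mul] at hg
  have hxq1 : c u ^ (q - 1) = 1 := orderOf_dvd_iff_pow_eq_one.mp hdvd
  have hfix : c u ^ q = c u := by
    calc c u ^ q = c u ^ (1 + (q - 1)) := by congr 1; omega
    _ = c u * c u ^ (q - 1) := by rw [pow_add, pow_one]
    _ = c u := by rw [hxq1, mul_one]
  rw [hxq] at hfix
  have : (1 : F) = 0 := by linear_combination hfix
  exact one_ne_zero this
end

section
/- For every i ≥ 2, there exist positive integers α_1, …, α_i such that α_j divides N_j and α_j > 1 for each 1 ≤ j ≤ i, and the multiplicative order of c_i equals ∏_{j=1}^{i} α_j. -/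
open Finset Polynomial

namespace ConwayAux

local notation "F" => AlgebraicClosure (ZMod 2)

/-- partial products -/
noncomputable def aa (c : ℕ → F) (k : ℕ) : F := ∏ j ∈ Finset.range (k + 1), c j

/-- partial trace sums -/
noncomputable def TT (n : ℕ) (x : F) : F := ∑ m ∈ Finset.range n, x ^ 2 ^ m

lemma addFF (a b : F) (h : a + b = 0) : a = b := by
  have := CharTwo.add_self_eq_zero b
  linear_combination h - this

/-- the subfield of elements fixed by `x ↦ x^(2^n)` -/
noncomputable def Sf (n : ℕ) : Subfield F where
  carrier := {x | x ^ 2 ^ n = x}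
  zero_mem' := by simp [zero_pow (pow_ne_zero n (two_ne_zero))]
  one_mem' := by simp
  add_mem' := by
    intro a b ha hb
    simp only [Set.mem_setOf_eq] at *
    rw [add_pow_char_pow a b 2 n, ha, hb]
  mul_mem' := by
    intro a b ha hb
    simp only [Set.mem_setOf_eq] at *
    rw [mul_pow, ha, hb]
  neg_mem' := by
    intro a ha
    simpa [CharTwo.neg_eq] using ha
  inv_mem' := by
    intro a ha
    simp only [Set.mem_setOf_eq] at *
    rw [inv_pow, ha]

lemma mem_Sf {n : ℕ} {x : F} : x ∈ Sf n ↔ x ^ 2 ^ n = x := Iff.rfl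

lemma Sf_mono {m n : ℕ} (h : m ∣ n) : Sf m ≤ Sf n := by
  obtain ⟨l, rfl⟩ := h
  intro x hx
  rw [mem_Sf] at hx ⊢
  induction l with
  | zero => simp
  | succ l ih =>
    have : 2 ^ (m * (l + 1)) = 2 ^ (m * l) * 2 ^ m := by ring
    rw [this, pow_mul, ih, hx]

lemma Sf_eq_rootSet {n : ℕ} (hn : n ≠ 0) :
    ((Sf n : Subfield F) : Set F) = (X ^ 2 ^ n - X : (ZMod 2)[X]).rootSet F := by
  ext x
  rw [SetLike.mem_coe, mem_Sf, Polynomial.mem_rootSet]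
  constructor
  · intro h
    refine ⟨FiniteField.X_pow_card_pow_sub_X_ne_zero _ hn one_lt_two, ?_⟩
    simp [sub_eq_zero, h]
  · rintro ⟨-, h⟩
    simp only [map_sub, map_pow, aeval_X, sub_eq_zero] at h
    exact h

lemma Sf_finite {n : ℕ} (hn : n ≠ 0) : ((Sf n : Subfield F) : Set F).Finite := by
  rw [Sf_eq_rootSet hn]
  exact Set.toFinite _

lemma ncard_Sf {n : ℕ} (hn : n ≠ 0) : ((Sf n : Subfield F) : Set F).ncard = 2 ^ n := by
  rw [Sf_eq_rootSet hn]
  have hsep : (X ^ 2 ^ n - X : (ZMod 2)[X]).Separable :=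
    galois_poly_separable 2 (2 ^ n) (dvd_pow_self 2 hn)
  have hcard := Polynomial.card_rootSet_eq_natDegree (K := F) hsep
    (IsAlgClosed.splits _)
  rw [FiniteField.X_pow_card_pow_sub_X_natDegree_eq _ hn one_lt_two] at hcard
  rw [← Nat.card_coe_set_eq, Nat.card_eq_fintype_card, hcard]

lemma ncard_prod {α β : Type*} (s : Set α) (t : Set β) :
    (s ×ˢ t).ncard = s.ncard * t.ncard := by
  rw [← Nat.card_coe_set_eq, ← Nat.card_coe_set_eq, ← Nat.card_coe_set_eq,
    Nat.card_congr (Equiv.Set.prod s t), Nat.card_prod]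

/-- Every element of `Sf (2*m)` is `u + v * x` for `u v ∈ Sf m`, provided
`x ∈ Sf (2*m) \ Sf m`. -/
lemma Sf_rep {m : ℕ} (hm : m ≠ 0) {x : F} (hx : x ∈ Sf (2 * m)) (hx' : x ∉ Sf m)
    {y : F} (hy : y ∈ Sf (2 * m)) : ∃ u ∈ Sf m, ∃ v ∈ Sf m, y = u + v * x := by
  set S : Set F := ((Sf m : Subfield F) : Set F) with hS
  set f : F × F → F := fun p => p.1 + p.2 * x with hf
  have hinj : Set.InjOn f (S ×ˢ S) := by
    rintro ⟨u, v⟩ ⟨hu, hv⟩ ⟨u', v'⟩ ⟨hu', hv'⟩ h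
    simp only [hf] at h
    simp only [hS, SetLike.mem_coe] at hu hv hu' hv'
    by_cases hvv : v = v'
    · subst hvv
      have : u = u' := by linear_combination h
      exact Prod.ext this rfl
    · exfalso
      apply hx'
      have hne : v - v' ≠ 0 := sub_ne_zero.mpr hvv
      have hxeq : x = (u' - u) / (v - v') := by
        rw [eq_div_iff hne]
        linear_combination h
      rw [hxeq]
      exact div_mem (sub_mem hu' hu) (sub_mem hv hv')
  have hmem : ∀ p ∈ S ×ˢ S, f p ∈ Sf (2 * m) := by
    rintro ⟨u, v⟩ ⟨hu, hv⟩
    simp only [hS, SetLike.mem_coe] at hu hv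
    exact add_mem (Sf_mono (dvd_mul_left m 2) hu)
      (mul_mem (Sf_mono (dvd_mul_left m 2) hv) hx)
  have hsub : f '' (S ×ˢ S) ⊆ ((Sf (2 * m) : Subfield F) : Set F) := by
    rintro - ⟨p, hp, rfl⟩
    exact hmem p hp
  have h2m : 2 * m ≠ 0 := by positivity
  have hcard : (f '' (S ×ˢ S)).ncard = ((Sf (2 * m) : Subfield F) : Set F).ncard := by
    rw [Set.ncard_image_of_injOn hinj, ncard_prod, hS, ncard_Sf hm, ncard_Sf h2m,
      ← pow_add, two_mul]
  have heq : f '' (S ×ˢ S) = ((Sf (2 * m) : Subfield F) : Set F) :=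
    Set.eq_of_subset_of_ncard_le hsub hcard.ge (Sf_finite h2m)
  have : y ∈ f '' (S ×ˢ S) := by rw [heq]; exact hy
  obtain ⟨⟨u, v⟩, ⟨hu, hv⟩, rfl⟩ := this
  exact ⟨u, hu, v, hv, rfl⟩


section Tower

variable {c : ℕ → F}

lemma aa_succ (k : ℕ) : aa c (k + 1) = aa c k * c (k + 1) := Finset.prod_range_succ _ _

lemma aa_zero : aa c 0 = c 0 := Finset.prod_range_one _

lemma c0_sq (hc0 : c 0 ^ 2 + c 0 + 1 = 0) : c 0 ^ 2 = c 0 + 1 := by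
  apply addFF; linear_combination hc0

lemma c0_cube (hc0 : c 0 ^ 2 + c 0 + 1 = 0) : c 0 ^ 3 = 1 := by
  linear_combination (c 0 - 1) * hc0

lemma c0_ne_one (hc0 : c 0 ^ 2 + c 0 + 1 = 0) : c 0 ≠ 1 := by
  intro h
  rw [h] at hc0
  have h2 : (2 : F) = 0 := CharTwo.two_eq_zero
  have : (1 : F) = 0 := by linear_combination hc0 - h2
  exact one_ne_zero this

lemma ord_c0 (hc0 : c 0 ^ 2 + c 0 + 1 = 0) : orderOf (c 0) = 3 :=
  orderOf_eq_prime (c0_cube hc0) (c0_ne_one hc0)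

lemma c_sq (hrec : ∀ i : ℕ, c (i + 1) ^ 2 + c (i + 1) + ∏ j ∈ Finset.range (i + 1), c j = 0)
    (k : ℕ) : c (k + 1) ^ 2 = c (k + 1) + aa c k := by
  apply addFF
  have h := hrec k
  rw [aa]
  linear_combination h

lemma c_ne_zero (hc0 : c 0 ^ 2 + c 0 + 1 = 0)
    (hrec : ∀ i : ℕ, c (i + 1) ^ 2 + c (i + 1) + ∏ j ∈ Finset.range (i + 1), c j = 0) :
    ∀ k, c k ≠ 0 := by
  intro k
  induction k using Nat.strong_induction_on with
  | _ k ih =>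
    match k with
    | 0 =>
      intro h
      rw [h] at hc0
      simpa using hc0
    | k + 1 =>
      intro h
      have ha : aa c k = 0 := by
        have := hrec k
        rw [h] at this
        simpa [aa] using this
      rw [aa, Finset.prod_eq_zero_iff] at ha
      obtain ⟨j, hj, hj0⟩ := ha
      exact ih j (Finset.mem_range.mp hj) hj0

lemma aa_ne_zero (hc0 : c 0 ^ 2 + c 0 + 1 = 0)
    (hrec : ∀ i : ℕ, c (i + 1) ^ 2 + c (i + 1) + ∏ j ∈ Finset.range (i + 1), c j = 0)
    (k : ℕ) : aa c k ≠ 0 :=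
  Finset.prod_ne_zero_iff.mpr fun j _ => c_ne_zero hc0 hrec j

lemma c_pow_pow (hrec : ∀ i : ℕ, c (i + 1) ^ 2 + c (i + 1) + ∏ j ∈ Finset.range (i + 1), c j = 0)
    (k n : ℕ) : c (k + 1) ^ 2 ^ n = c (k + 1) + TT n (aa c k) := by
  induction n with
  | zero => simp [TT]
  | succ n ih =>
    have h1 : (2 : ℕ) ^ (n + 1) = 2 ^ n * 2 := by ring
    rw [h1, pow_mul, ih]
    rw [add_pow_char (c (k+1)) (TT n (aa c k)) 2, c_sq hrec k]
    have h2 : TT n (aa c k) ^ 2 = ∑ m ∈ Finset.range n, aa c k ^ 2 ^ (m + 1) := by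
      rw [TT, sum_pow_char]
      apply Finset.sum_congr rfl
      intro m _
      rw [← pow_mul]
      ring_nf
    have h3 : TT (n + 1) (aa c k) = aa c k + ∑ m ∈ Finset.range n, aa c k ^ 2 ^ (m + 1) := by
      rw [TT, Finset.sum_range_succ']
      simp [add_comm]
    rw [h2, h3]
    ring

lemma TT_sq {n : ℕ} {x : F} (hx : x ∈ Sf n) : TT n x ^ 2 = TT n x := by
  rw [mem_Sf] at hx
  have h2 : TT n x ^ 2 = ∑ m ∈ Finset.range n, x ^ 2 ^ (m + 1) := by
    rw [TT, sum_pow_char]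
    apply Finset.sum_congr rfl
    intro m _
    rw [← pow_mul]
    ring_nf
  have h3 : TT (n + 1) x = x + ∑ m ∈ Finset.range n, x ^ 2 ^ (m + 1) := by
    rw [TT, Finset.sum_range_succ']
    simp [add_comm]
  have h4 : TT (n + 1) x = TT n x + x ^ 2 ^ n := by
    rw [TT, TT, Finset.sum_range_succ]
  have h5 : x + ∑ m ∈ Finset.range n, x ^ 2 ^ (m + 1) = TT n x + x := by
    rw [← h3, h4, hx]
  rw [h2]
  have hxx : x + x = 0 := CharTwo.add_self_eq_zero x
  linear_combination h5

lemma TT_zero_or_one {n : ℕ} {x : F} (hx : x ∈ Sf n) : TT n x = 0 ∨ TT n x = 1 := by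
  have h := TT_sq hx
  have : TT n x * (TT n x - 1) = 0 := by ring_nf; linear_combination h
  rcases mul_eq_zero.mp this with h' | h'
  · exact Or.inl h'
  · exact Or.inr (by linear_combination h')

lemma TT_add_self {n : ℕ} {x : F} (hx : x ∈ Sf n) : TT (n + n) x = 0 := by
  have key : TT (n + n) x = TT n x + TT n x ^ 2 ^ n := by
    rw [TT, Finset.sum_range_add, TT, sum_pow_char_pow]
    congr 1
    apply Finset.sum_congr rfl
    intro m _
    rw [← pow_mul, ← pow_add, add_comm m n]
  rcases TT_zero_or_one hx with h | h <;> rw [key, h]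
  · simp
  · simpa using CharTwo.add_self_eq_zero (1 : F)

lemma c_fix (hc0 : c 0 ^ 2 + c 0 + 1 = 0)
    (hrec : ∀ i : ℕ, c (i + 1) ^ 2 + c (i + 1) + ∏ j ∈ Finset.range (i + 1), c j = 0) :
    ∀ k, c k ∈ Sf (2 ^ (k + 1)) := by
  intro k
  induction k using Nat.strong_induction_on with
  | _ k ih =>
    match k with
    | 0 =>
      rw [mem_Sf]
      have h3 := c0_cube hc0
      have : (2 : ℕ) ^ 2 ^ 1 = 4 := by norm_num
      rw [this, show (4 : ℕ) = 3 + 1 by norm_num, pow_add, h3, one_mul, pow_one]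
    | k + 1 =>
      have haa : aa c k ∈ Sf (2 ^ (k + 1)) := by
        rw [aa]
        apply prod_mem
        intro j hj
        have hjk : j < k + 1 := Finset.mem_range.mp hj
        exact Sf_mono (pow_dvd_pow 2 hjk) (ih j hjk)
      rw [mem_Sf]
      have h1 : (2 : ℕ) ^ (k + 2) = 2 ^ (k + 1) + 2 ^ (k + 1) := by ring
      rw [h1, c_pow_pow hrec, TT_add_self haa, add_zero]

lemma S_sub_L (hc0 : c 0 ^ 2 + c 0 + 1 = 0)
    (hrec : ∀ i : ℕ, c (i + 1) ^ 2 + c (i + 1) + ∏ j ∈ Finset.range (i + 1), c j = 0)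
    (hnot : ∀ i : ℕ, c (i + 1) ∉ conwayL c (i + 1)) :
    ∀ k, (((Sf (2 ^ (k + 1)) : Subfield F) : Set F) ⊆ (conwayL c (k + 1) : Set F)) ∧
      TT (2 ^ (k + 1)) (aa c k) = 1 := by
  intro k
  induction k with
  | zero =>
    have hc0mem : c 0 ∈ conwayL c 1 :=
      IntermediateField.subset_adjoin _ _ ⟨0, Set.mem_Iio.mpr Nat.zero_lt_one, rfl⟩
    constructor
    · intro y hy
      have h2 : (2 : ℕ) ^ (0 + 1) = 2 * 1 := by norm_num
      rw [h2] at hy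
      have hx : c 0 ∈ Sf (2 * 1) := by
        have := c_fix hc0 hrec 0
        rwa [show (2:ℕ) ^ (0 + 1) = 2 * 1 by norm_num] at this
      have hx' : c 0 ∉ Sf 1 := by
        rw [mem_Sf, pow_one, c0_sq hc0]
        intro h
        have : (1 : F) = 0 := by linear_combination h
        exact one_ne_zero this
      obtain ⟨u, hu, v, hv, rfl⟩ := Sf_rep one_ne_zero hx hx' hy
      have hbin : ∀ w : F, w ∈ Sf 1 → w ∈ conwayL c 1 := by
        intro w hw
        rw [mem_Sf, pow_one] at hw
        have : w * (w - 1) = 0 := by ring_nf; linear_combination hw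
        rcases mul_eq_zero.mp this with h | h
        · rw [h]; exact zero_mem _
        · rw [sub_eq_zero.mp h]; exact one_mem _
      exact add_mem (hbin u hu) (mul_mem (hbin v hv) hc0mem)
    · have h2 : (2 : ℕ) ^ (0 + 1) = 2 := by norm_num
      rw [h2, aa_zero, TT, Finset.sum_range_succ, Finset.sum_range_one]
      have h2' : (2 : F) = 0 := CharTwo.two_eq_zero
      linear_combination hc0 - h2'
  | succ k ihk =>
    obtain ⟨hLsub, ht⟩ := ihk
    have hcnot : c (k + 1) ∉ Sf (2 ^ (k + 1)) := by
      rw [mem_Sf, c_pow_pow hrec, ht]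
      intro h
      have : (1 : F) = 0 := by linear_combination h
      exact one_ne_zero this
    have hcmem : c (k + 1) ∈ Sf (2 * 2 ^ (k + 1)) := by
      have := c_fix hc0 hrec (k + 1)
      rwa [show (2:ℕ) ^ (k + 2) = 2 * 2 ^ (k + 1) by ring] at this
    have hcL : c (k + 1) ∈ conwayL c (k + 2) :=
      IntermediateField.subset_adjoin _ _ ⟨k + 1, Set.mem_Iio.mpr (Nat.lt_succ_self _), rfl⟩
    have hmono : (conwayL c (k + 1) : IntermediateField (ZMod 2) F) ≤ conwayL c (k + 2) := by
      apply IntermediateField.adjoin.mono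
      exact Set.image_mono (Set.Iio_subset_Iio (Nat.le_succ _))
    have hsub : ((Sf (2 ^ (k + 2)) : Subfield F) : Set F) ⊆ (conwayL c (k + 2) : Set F) := by
      intro y hy
      rw [SetLike.mem_coe, show (2:ℕ) ^ (k + 2) = 2 * 2 ^ (k + 1) by ring] at hy
      obtain ⟨u, hu, v, hv, rfl⟩ := Sf_rep (pow_ne_zero _ two_ne_zero) hcmem hcnot hy
      exact add_mem (hmono (hLsub hu)) (mul_mem (hmono (hLsub hv)) hcL)
    refine ⟨hsub, ?_⟩
    have haa : aa c (k + 1) ∈ Sf (2 ^ (k + 2)) := by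
      rw [aa]
      apply prod_mem
      intro j hj
      have hjk : j < k + 2 := Finset.mem_range.mp hj
      exact Sf_mono (pow_dvd_pow 2 hjk) (c_fix hc0 hrec j)
    rcases TT_zero_or_one haa with h0 | h1
    · exfalso
      apply hnot (k + 1)
      have : c (k + 2) ∈ Sf (2 ^ (k + 2)) := by
        rw [mem_Sf, c_pow_pow hrec, h0, add_zero]
      exact hsub this
    · exact h1

/-- the norm relation: `c_{k+1} ^ (2^(2^(k+1)) + 1) = a_k`. -/
lemma c_pow_N (hc0 : c 0 ^ 2 + c 0 + 1 = 0)
    (hrec : ∀ i : ℕ, c (i + 1) ^ 2 + c (i + 1) + ∏ j ∈ Finset.range (i + 1), c j = 0)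
    (hnot : ∀ i : ℕ, c (i + 1) ∉ conwayL c (i + 1)) (k : ℕ) :
    c (k + 1) ^ (2 ^ 2 ^ (k + 1) + 1) = aa c k := by
  have ht := (S_sub_L hc0 hrec hnot k).2
  have hq : c (k + 1) ^ 2 ^ 2 ^ (k + 1) = c (k + 1) + 1 := by
    rw [c_pow_pow hrec, ht]
  rw [pow_add, hq, pow_one]
  have hsq := c_sq hrec k
  have hcc : c (k + 1) + c (k + 1) = 0 := CharTwo.add_self_eq_zero _
  linear_combination hsq + hcc

lemma c_finOrder (hc0 : c 0 ^ 2 + c 0 + 1 = 0)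
    (hrec : ∀ i : ℕ, c (i + 1) ^ 2 + c (i + 1) + ∏ j ∈ Finset.range (i + 1), c j = 0)
    (k : ℕ) : IsOfFinOrder (c k) := by
  have hfix := c_fix hc0 hrec k
  rw [mem_Sf] at hfix
  have hne := c_ne_zero hc0 hrec k
  have h1 : 2 ≤ 2 ^ 2 ^ (k + 1) := by
    calc (2:ℕ) = 2 ^ 1 := rfl
    _ ≤ 2 ^ 2 ^ (k + 1) := Nat.pow_le_pow_right two_pos Nat.one_le_two_pow
  refine isOfFinOrder_iff_pow_eq_one.mpr ⟨2 ^ 2 ^ (k + 1) - 1, by omega, ?_⟩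
  have : c k ^ (2 ^ 2 ^ (k + 1) - 1) * c k = c k := by
    rw [← pow_succ, Nat.sub_add_cancel (by omega), hfix]
  field_simp at this
  exact this

lemma mem_Sf_of_orderOf_dvd {n : ℕ} {x : F} (hx : x ≠ 0) (h : orderOf x ∣ 2 ^ n - 1) :
    x ∈ Sf n := by
  have h1 : 1 ≤ 2 ^ n := Nat.one_le_two_pow
  have hpow : x ^ (2 ^ n - 1) = 1 := orderOf_dvd_iff_pow_eq_one.mp h
  rw [mem_Sf, show 2 ^ n = (2 ^ n - 1) + 1 by omega, pow_add, hpow, one_mul, pow_one]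

end Tower


section NumberTheory

lemma add_one_dvd_sq_sub_one (a : ℕ) (ha : 1 ≤ a) : (a + 1) ∣ a * a - 1 := by
  refine ⟨a - 1, ?_⟩
  obtain ⟨b, rfl⟩ := Nat.exists_eq_add_of_le ha
  have h : (1 + b) * (1 + b) = ((1 + b) + 1) * b + 1 := by ring
  have h' : (1 + b + 1) * (1 + b - 1) = (1 + b + 1) * b := by
    congr 1
    omega
  omega

lemma fermat_dvd_mersenne (j : ℕ) : fermatN j ∣ 2 ^ 2 ^ (j + 1) - 1 := by
  have h1 : 1 ≤ 2 ^ 2 ^ j := Nat.one_le_two_pow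
  have h2 : 2 ^ 2 ^ (j + 1) = 2 ^ 2 ^ j * 2 ^ 2 ^ j := by
    rw [← pow_add]
    congr 1
    ring
  rw [fermatN, h2]
  exact add_one_dvd_sq_sub_one _ h1

lemma pow_add_one_dvd (h : ℕ) : 2 ^ h + 1 ∣ 2 ^ (2 * h) - 1 := by
  have h1 : 1 ≤ 2 ^ h := Nat.one_le_two_pow
  have h2 : 2 ^ (2 * h) = 2 ^ h * 2 ^ h := by
    rw [← pow_add]
    congr 1
    ring
  rw [h2]
  exact add_one_dvd_sq_sub_one _ h1

lemma zmod_two_pow_eq_one {p a : ℕ} (hp : p.Prime) (h : p ∣ 2 ^ a - 1) :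
    (2 : ZMod p) ^ a = 1 := by
  haveI : NeZero p := ⟨hp.pos.ne'⟩
  have h1 : 1 ≤ 2 ^ a := Nat.one_le_two_pow
  have h0 : ((2 ^ a - 1 : ℕ) : ZMod p) = 0 := (ZMod.natCast_eq_zero_iff _ _).mpr h
  rw [Nat.cast_sub h1] at h0
  push_cast at h0
  linear_combination h0

lemma coprime_key {n : ℕ} (hn : 1 ≤ n) (E : ℕ)
    (hE : ∀ p : ℕ, p.Prime → p ∣ E → ∃ j, 1 ≤ j ∧ p ∣ fermatN j) :
    Nat.Coprime E (2 ^ 2 ^ n + 2) := by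
  by_contra hg
  obtain ⟨p, hp, hpg⟩ := Nat.exists_prime_and_dvd hg
  have hpE : p ∣ E := hpg.trans (Nat.gcd_dvd_left _ _)
  have hpK : p ∣ 2 ^ 2 ^ n + 2 := hpg.trans (Nat.gcd_dvd_right _ _)
  obtain ⟨j, hj1, hpj⟩ := hE p hp hpE
  have hodd : Odd (fermatN j) := Nat.odd_fermatNumber j
  have hp2 : p ≠ 2 := by
    rintro rfl
    rw [Nat.odd_iff] at hodd
    omega
  have hpcop2 : Nat.Coprime p 2 := Nat.coprime_two_right.mpr (hp.odd_of_ne_two hp2)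
  have h1n : 1 ≤ 2 ^ n := Nat.one_le_two_pow
  have hsplit : 2 ^ 2 ^ n + 2 = 2 * (2 ^ (2 ^ n - 1) + 1) := by
    have : 2 * 2 ^ (2 ^ n - 1) = 2 ^ 2 ^ n := by
      rw [← pow_succ']
      congr 1
      omega
    omega
  have hpH : p ∣ 2 ^ (2 ^ n - 1) + 1 := by
    have h := hpK
    rw [hsplit] at h
    exact hpcop2.dvd_of_dvd_mul_left h
  have hpM1 : p ∣ 2 ^ 2 ^ (j + 1) - 1 := hpj.trans (fermat_dvd_mersenne j)
  have hpM2 : p ∣ 2 ^ (2 * (2 ^ n - 1)) - 1 := hpH.trans (pow_add_one_dvd _)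
  have hu1 := zmod_two_pow_eq_one hp hpM1
  have hu2 := zmod_two_pow_eq_one hp hpM2
  have hu3 := pow_gcd_eq_one.mpr ⟨hu1, hu2⟩
  have hoddm : Odd (2 ^ n - 1) :=
    Nat.Even.sub_odd h1n ((Nat.even_pow' (by omega)).mpr even_two) odd_one
  have hgcd2 : Nat.gcd (2 ^ (j + 1)) (2 * (2 ^ n - 1)) = 2 := by
    rw [pow_succ']
    rw [Nat.gcd_mul_left]
    have : Nat.gcd (2 ^ j) (2 ^ n - 1) = 1 :=
      Nat.Coprime.pow_left j (Nat.coprime_two_left.mpr hoddm)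
    rw [this, mul_one]
  rw [hgcd2] at hu3
  have h3z : ((3 : ℕ) : ZMod p) = 0 := by
    push_cast
    linear_combination hu3
  have hp3 : p ∣ 3 := by
    haveI : NeZero p := ⟨hp.pos.ne'⟩
    exact (ZMod.natCast_eq_zero_iff 3 p).mp h3z
  have hp3' : p = 3 := (Nat.prime_dvd_prime_iff_eq hp (by norm_num)).mp hp3
  subst hp3'
  have hcop : Nat.Coprime (Nat.fermatNumber 0) (Nat.fermatNumber j) :=
    Nat.coprime_fermatNumber_fermatNumber (by omega)
  have h31 : (3 : ℕ) = 1 := by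
    have : Nat.fermatNumber 0 = 3 := rfl
    rw [this] at hcop
    exact hcop.eq_one_of_dvd hpj
  omega

lemma prod_fermat_dvd {α : ℕ → ℕ} {i : ℕ}
    (hα : ∀ j, 1 ≤ j → j ≤ i → α j ∣ fermatN j) :
    ∏ j ∈ Finset.Icc 1 i, α j ∣ 2 ^ 2 ^ (i + 1) - 1 := by
  have h1 : ∏ j ∈ Finset.Icc 1 i, α j ∣ ∏ j ∈ Finset.Icc 1 i, fermatN j :=
    Finset.prod_dvd_prod_of_dvd _ _ fun j hj =>
      hα j (Finset.mem_Icc.mp hj).1 (Finset.mem_Icc.mp hj).2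
  have h2 : ∏ j ∈ Finset.Icc 1 i, fermatN j ∣ ∏ j ∈ Finset.range (i + 1), fermatN j := by
    apply Finset.prod_dvd_prod_of_subset
    intro j hj
    rw [Finset.mem_Icc] at hj
    rw [Finset.mem_range]
    omega
  have h3 : ∏ j ∈ Finset.range (i + 1), fermatN j = 2 ^ 2 ^ (i + 1) - 1 := by
    have := Nat.prod_fermatNumber (i + 1)
    have heq : ∀ j, fermatN j = Nat.fermatNumber j := fun _ => rfl
    simp only [heq]
    rw [this, Nat.fermatNumber]
    have := Nat.one_le_two_pow (n := 2 ^ (i + 1))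
    omega
  exact h1.trans (h3 ▸ h2)

end NumberTheory


section Order

variable {c : ℕ → F}

lemma c_step (hc0 : c 0 ^ 2 + c 0 + 1 = 0)
    (hrec : ∀ i : ℕ, c (i + 1) ^ 2 + c (i + 1) + ∏ j ∈ Finset.range (i + 1), c j = 0)
    (hnot : ∀ i : ℕ, c (i + 1) ∉ conwayL c (i + 1)) (k : ℕ) {D : ℕ}
    (hD : orderOf (aa c k) = D) (hDdvd : D ∣ 2 ^ 2 ^ (k + 1) - 1) :
    ∃ m, m ∣ fermatN (k + 1) ∧ 1 < m ∧ orderOf (c (k + 1)) = D * m := by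
  have hN := c_pow_N hc0 hrec hnot k
  have hfin := c_finOrder hc0 hrec (k + 1)
  have hcpos : 0 < orderOf (c (k + 1)) := hfin.orderOf_pos
  have hDpos : 0 < D := by
    rw [← hD, ← hN]
    exact (hfin.pow).orderOf_pos
  have hdvd1 : D ∣ orderOf (c (k + 1)) := by
    rw [← hD, ← hN]
    exact orderOf_pow_dvd _
  have hdvd2 : orderOf (c (k + 1)) ∣ (2 ^ 2 ^ (k + 1) + 1) * D := by
    apply orderOf_dvd_iff_pow_eq_one.mpr
    rw [pow_mul, hN, ← hD]
    exact pow_orderOf_eq_one _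
  obtain ⟨m, hm⟩ := hdvd1
  have hmN : m ∣ 2 ^ 2 ^ (k + 1) + 1 := by
    have h2 : D * m ∣ D * (2 ^ 2 ^ (k + 1) + 1) := by
      rw [← hm, mul_comm D]
      exact hdvd2
    exact (mul_dvd_mul_iff_left hDpos.ne').mp h2
  have hm1 : 1 < m := by
    rcases Nat.lt_or_ge m 2 with h | h
    · interval_cases m
      · rw [mul_zero] at hm
        omega
      · exfalso
        rw [mul_one] at hm
        have hdvd3 : orderOf (c (k + 1)) ∣ 2 ^ 2 ^ (k + 1) - 1 := by
          rw [hm]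
          exact hDdvd
        have hmem : c (k + 1) ∈ Sf (2 ^ (k + 1)) :=
          mem_Sf_of_orderOf_dvd (c_ne_zero hc0 hrec _) hdvd3
        exact hnot k ((S_sub_L hc0 hrec hnot k).1 hmem)
    · omega
  exact ⟨m, by rwa [fermatN], hm1, hm⟩

lemma ord_aa (hc0 : c 0 ^ 2 + c 0 + 1 = 0)
    (hrec : ∀ i : ℕ, c (i + 1) ^ 2 + c (i + 1) + ∏ j ∈ Finset.range (i + 1), c j = 0)
    (hnot : ∀ i : ℕ, c (i + 1) ∉ conwayL c (i + 1)) :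
    ∀ i, 1 ≤ i →
    ∃ α : ℕ → ℕ, (∀ j, 1 ≤ j → j ≤ i → α j ∣ fermatN j ∧ 1 < α j) ∧
      orderOf (aa c i) = ∏ j ∈ Finset.Icc 1 i, α j := by
  intro i hi
  induction i, hi using Nat.le_induction with
  | base =>
    have hD : orderOf (aa c 0) = 3 := by rw [aa_zero]; exact ord_c0 hc0
    have hDdvd : (3 : ℕ) ∣ 2 ^ 2 ^ (0 + 1) - 1 := by norm_num
    obtain ⟨m, hm5, hm1, hord⟩ := c_step hc0 hrec hnot 0 hD hDdvd
    have hm5' : m = 5 := by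
      have h5 : fermatN 1 = 5 := by norm_num [fermatN]
      rw [h5] at hm5
      rcases (by norm_num : Nat.Prime 5).eq_one_or_self_of_dvd m hm5 with h | h <;> omega
    rw [hm5'] at hord
    have hN0 : c 1 ^ 5 = aa c 0 := by
      have h := c_pow_N hc0 hrec hnot 0
      norm_num at h
      exact h
    have haa1 : aa c 1 = c 1 ^ 6 := by
      rw [aa_succ 0, ← hN0, ← pow_succ]
    have hfin := c_finOrder hc0 hrec 1
    have hordaa : orderOf (aa c 1) = 5 := by
      rw [haa1, hfin.orderOf_pow, hord]
      decide
    refine ⟨fun _ => 5, ?_, ?_⟩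
    · intro j hj1 hj2
      have hj : j = 1 := by omega
      subst hj
      exact ⟨by norm_num [fermatN], by norm_num⟩
    · rw [hordaa, Finset.Icc_self, Finset.prod_singleton]
  | succ i hi ih =>
    obtain ⟨α, hα, hord⟩ := ih
    set D := ∏ j ∈ Finset.Icc 1 i, α j with hDdef
    have hDdvd : D ∣ 2 ^ 2 ^ (i + 1) - 1 := prod_fermat_dvd (fun j h1 h2 => (hα j h1 h2).1)
    obtain ⟨m, hmN, hm1, hcord⟩ := c_step hc0 hrec hnot i hord hDdvd
    set α' : ℕ → ℕ := Function.update α (i + 1) m with hα'def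
    have hα'eq : ∀ j, j ≤ i → α' j = α j := by
      intro j hj
      apply Function.update_of_ne
      omega
    have hα'top : α' (i + 1) = m := Function.update_self _ _ _
    have hprod : ∏ j ∈ Finset.Icc 1 (i + 1), α' j = D * m := by
      rw [Finset.prod_Icc_succ_top (by omega : 1 ≤ i + 1), hα'top, hDdef]
      congr 1
      exact Finset.prod_congr rfl fun j hj => hα'eq j (Finset.mem_Icc.mp hj).2
    have hspec : ∀ j, 1 ≤ j → j ≤ i + 1 → α' j ∣ fermatN j ∧ 1 < α' j := by
      intro j hj1 hj2
      rcases Nat.lt_or_ge j (i + 1) with h | h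
      · rw [hα'eq j (by omega)]
        exact hα j hj1 (by omega)
      · have hj : j = i + 1 := by omega
        subst hj
        rw [hα'top]
        exact ⟨hmN, hm1⟩
    refine ⟨α', hspec, ?_⟩
    have hN : c (i + 1) ^ (2 ^ 2 ^ (i + 1) + 1) = aa c i := c_pow_N hc0 hrec hnot i
    have haa : aa c (i + 1) = c (i + 1) ^ (2 ^ 2 ^ (i + 1) + 2) := by
      rw [aa_succ, ← hN, ← pow_succ]
    have hfin := c_finOrder hc0 hrec (i + 1)
    have hcop : Nat.Coprime (D * m) (2 ^ 2 ^ (i + 1) + 2) := by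
      apply coprime_key (by omega)
      intro p hp hpdvd
      rw [← hprod] at hpdvd
      obtain ⟨j, hj, hpj⟩ := hp.prime.exists_mem_finset_dvd hpdvd
      rw [Finset.mem_Icc] at hj
      exact ⟨j, hj.1, hpj.trans (hspec j hj.1 hj.2).1⟩
    rw [haa, hfin.orderOf_pow, hcord, hprod]
    rw [Nat.Coprime] at hcop
    rw [hcop, Nat.div_one]

end Order

end ConwayAux

/-- For every `i ≥ 2`, there exist positive integers `α_1, …, α_i` with
`α_j ∣ N_j` and `α_j > 1` for `1 ≤ j ≤ i`, such that the multiplicative order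
of `c_i` equals `∏_{j=1}^{i} α_j`. -/
theorem conway_orderOf_c (c : ℕ → AlgebraicClosure (ZMod 2))
    (hc0 : c 0 ^ 2 + c 0 + 1 = 0)
    (hrec : ∀ i : ℕ, c (i + 1) ^ 2 + c (i + 1) + ∏ j ∈ Finset.range (i + 1), c j = 0)
    (hnot : ∀ i : ℕ, c (i + 1) ∉ conwayL c (i + 1))
    (i : ℕ) (hi : 2 ≤ i) :
    ∃ α : ℕ → ℕ, (∀ j : ℕ, 1 ≤ j → j ≤ i → α j ∣ fermatN j ∧ 1 < α j) ∧
      orderOf (c i) = ∏ j ∈ Finset.Icc 1 i, α j := by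
  obtain ⟨k, rfl⟩ : ∃ k, i = k + 1 := ⟨i - 1, by omega⟩
  have hk1 : 1 ≤ k := by omega
  obtain ⟨α, hα, hord⟩ := ConwayAux.ord_aa hc0 hrec hnot k hk1
  have hDdvd : ∏ j ∈ Finset.Icc 1 k, α j ∣ 2 ^ 2 ^ (k + 1) - 1 :=
    ConwayAux.prod_fermat_dvd (fun j h1 h2 => (hα j h1 h2).1)
  obtain ⟨m, hmN, hm1, hcord⟩ := ConwayAux.c_step hc0 hrec hnot k hord hDdvd
  set α' : ℕ → ℕ := Function.update α (k + 1) m with hα'def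
  have hα'eq : ∀ j, j ≤ k → α' j = α j := by
    intro j hj
    apply Function.update_of_ne
    omega
  have hα'top : α' (k + 1) = m := Function.update_self _ _ _
  have hspec : ∀ j, 1 ≤ j → j ≤ k + 1 → α' j ∣ fermatN j ∧ 1 < α' j := by
    intro j hj1 hj2
    rcases Nat.lt_or_ge j (k + 1) with h | h
    · rw [hα'eq j (by omega)]
      exact hα j hj1 (by omega)
    · have hj : j = k + 1 := by omega
      subst hj
      rw [hα'top]
      exact ⟨hmN, hm1⟩
  refine ⟨α', hspec, ?_⟩
  rw [hcord, Finset.prod_Icc_succ_top (by omega : 1 ≤ k + 1), hα'top]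
  congr 1
  exact (Finset.prod_congr rfl fun j hj => hα'eq j (Finset.mem_Icc.mp hj).2).symm
end
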